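/- Let A_Γ be a right-angled Artin group on a finite simplicial graph Γ. Then A_Γ admits a surjection onto ℤ with finitely generated kernel (sending every standard generator to 1) if and only if Γ is connected. -/

import Mathlib

/-- The right-angled Artin group of a simplicial graph. -/
def RAAG {V : Type} (G : SimpleGraph V) : Type :=
  PresentedGroup {r : FreeGroup V | ∃ u v : V, G.Adj u v ∧
    r = FreeGroup.of u * FreeGroup.of v * (FreeGroup.of u)⁻¹ * (FreeGroup.of v)⁻¹}

instance {V : Type} (G : SimpleGraph V) : Group (RAAG G) := by
  unfold RAAG; infer_instance

/-- The standard generator of a RAAG corresponding to a vertex. -/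
def RAAG.gen {V : Type} (G : SimpleGraph V) (v : V) : RAAG G :=
  PresentedGroup.of v

namespace RaagAux

variable {V : Type} (G : SimpleGraph V)

def rels (G : SimpleGraph V) : Set (FreeGroup V) :=
  {r : FreeGroup V | ∃ u v : V, G.Adj u v ∧
    r = FreeGroup.of u * FreeGroup.of v * (FreeGroup.of u)⁻¹ * (FreeGroup.of v)⁻¹}

lemma gen_comm {u v : V} (h : G.Adj u v) :
    RAAG.gen G u * RAAG.gen G v = RAAG.gen G v * RAAG.gen G u := by
  have h1 : PresentedGroup.mk (rels G)
      (FreeGroup.of u * FreeGroup.of v * (FreeGroup.of u)⁻¹ * (FreeGroup.of v)⁻¹) = 1 := by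
    apply (QuotientGroup.eq_one_iff _).2
    exact Subgroup.subset_normalClosure ⟨u, v, h, rfl⟩
  simp only [map_mul, map_inv] at h1
  have : (RAAG.gen G u * RAAG.gen G v) * ((RAAG.gen G v * RAAG.gen G u))⁻¹ = 1 := by
    rw [mul_inv_rev]
    simp only [mul_assoc] at h1 ⊢; exact h1
  rw [mul_inv_eq_one] at this
  exact this

lemma gen_range_top : Subgroup.closure (Set.range (RAAG.gen G)) = (⊤ : Subgroup (RAAG G)) :=
  PresentedGroup.closure_range_of (rels G)

/-- The set of edge elements `uv⁻¹`. -/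
def edgeSet : Set (RAAG G) :=
  {x | ∃ u v : V, G.Adj u v ∧ x = RAAG.gen G u * (RAAG.gen G v)⁻¹}

/-- The candidate kernel: subgroup generated by edge elements. -/
def H : Subgroup (RAAG G) := Subgroup.closure (edgeSet G)

lemma commute_gen {u v : V} (h : G.Adj u v) :
    Commute (RAAG.gen G u) (RAAG.gen G v) := gen_comm G h

lemma mem_H_of_walk {u v : V} (p : G.Walk u v) :
    RAAG.gen G u * (RAAG.gen G v)⁻¹ ∈ H G ∧ (RAAG.gen G u)⁻¹ * RAAG.gen G v ∈ H G := by
  induction p with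
  | nil => exact ⟨by simpa using (H G).one_mem, by simpa using (H G).one_mem⟩
  | @cons u w v h p ih =>
      constructor
      · have h1 : RAAG.gen G u * (RAAG.gen G w)⁻¹ ∈ H G :=
          Subgroup.subset_closure ⟨u, w, h, rfl⟩
        have := Subgroup.mul_mem _ h1 ih.1
        simpa [mul_assoc] using this
      · have h1 : (RAAG.gen G u)⁻¹ * RAAG.gen G w ∈ H G := by
        -- u⁻¹ w = w u⁻¹ which is an edge element for w ~ u
          rw [(commute_gen G h).inv_left.eq]
          exact Subgroup.subset_closure ⟨w, u, h.symm, rfl⟩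
        have := Subgroup.mul_mem _ h1 ih.2
        simpa [mul_assoc] using this

variable {G}

lemma elem1 (hc : G.Connected) (u v : V) :
    RAAG.gen G u * (RAAG.gen G v)⁻¹ ∈ H G :=
  (mem_H_of_walk G (hc.preconnected u v).some).1

lemma elem2 (hc : G.Connected) (u v : V) :
    (RAAG.gen G u)⁻¹ * RAAG.gen G v ∈ H G :=
  (mem_H_of_walk G (hc.preconnected u v).some).2

lemma conj_mem (hc : G.Connected) (c : V) {x : RAAG G} (hx : x ∈ H G) :
    RAAG.gen G c * x * (RAAG.gen G c)⁻¹ ∈ H G := by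
  induction hx using Subgroup.closure_induction'' with
  | one => simpa using (H G).one_mem
  | mem x hxs =>
      obtain ⟨a, b, hab, rfl⟩ := hxs
      have key : RAAG.gen G c * (RAAG.gen G a * (RAAG.gen G b)⁻¹) * (RAAG.gen G c)⁻¹
          = (RAAG.gen G c * (RAAG.gen G b)⁻¹) * (RAAG.gen G a * (RAAG.gen G c)⁻¹) := by
        rw [(commute_gen G hab).inv_right.eq]
        group
      rw [key]
      exact Subgroup.mul_mem _ (elem1 hc c b) (elem1 hc a c)
  | inv_mem x hxs =>
      obtain ⟨a, b, hab, rfl⟩ := hxs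
      have key : RAAG.gen G c * (RAAG.gen G a * (RAAG.gen G b)⁻¹)⁻¹ * (RAAG.gen G c)⁻¹
          = (RAAG.gen G c * (RAAG.gen G a)⁻¹) * (RAAG.gen G b * (RAAG.gen G c)⁻¹) := by
        rw [mul_inv_rev, inv_inv, (commute_gen G hab.symm).inv_right.eq]
        group
      rw [key]
      exact Subgroup.mul_mem _ (elem1 hc c a) (elem1 hc b c)
  | mul x y hx hy ihx ihy =>
      have : RAAG.gen G c * (x * y) * (RAAG.gen G c)⁻¹
          = (RAAG.gen G c * x * (RAAG.gen G c)⁻¹) * (RAAG.gen G c * y * (RAAG.gen G c)⁻¹) := by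
        group
      rw [this]
      exact Subgroup.mul_mem _ ihx ihy

lemma conj_mem' (hc : G.Connected) (c : V) {x : RAAG G} (hx : x ∈ H G) :
    (RAAG.gen G c)⁻¹ * x * RAAG.gen G c ∈ H G := by
  induction hx using Subgroup.closure_induction'' with
  | one => simpa using (H G).one_mem
  | mem x hxs =>
      obtain ⟨a, b, hab, rfl⟩ := hxs
      have key : (RAAG.gen G c)⁻¹ * (RAAG.gen G a * (RAAG.gen G b)⁻¹) * RAAG.gen G c
          = ((RAAG.gen G c)⁻¹ * RAAG.gen G a) * ((RAAG.gen G b)⁻¹ * RAAG.gen G c) := by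
        group
      rw [key]
      exact Subgroup.mul_mem _ (elem2 hc c a) ((H G).inv_mem_iff.1 (by
        simpa [mul_inv_rev] using elem2 hc c b))
  | inv_mem x hxs =>
      obtain ⟨a, b, hab, rfl⟩ := hxs
      have key : (RAAG.gen G c)⁻¹ * (RAAG.gen G a * (RAAG.gen G b)⁻¹)⁻¹ * RAAG.gen G c
          = ((RAAG.gen G c)⁻¹ * RAAG.gen G b) * ((RAAG.gen G a)⁻¹ * RAAG.gen G c) := by
        rw [mul_inv_rev, inv_inv]
        group
      rw [key]
      exact Subgroup.mul_mem _ (elem2 hc c b) ((H G).inv_mem_iff.1 (by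
        simpa [mul_inv_rev] using elem2 hc c a))
  | mul x y hx hy ihx ihy =>
      have : (RAAG.gen G c)⁻¹ * (x * y) * RAAG.gen G c
          = ((RAAG.gen G c)⁻¹ * x * RAAG.gen G c) * ((RAAG.gen G c)⁻¹ * y * RAAG.gen G c) := by
        group
      rw [this]
      exact Subgroup.mul_mem _ ihx ihy

lemma H_normal (hc : G.Connected) : (H G).Normal := by
  have hnorm : ∀ v : V, RAAG.gen G v ∈ Subgroup.normalizer (H G : Set (RAAG G)) := by
    intro v
    rw [Subgroup.mem_normalizer_iff]
    intro h
    constructor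
    · intro hh; exact conj_mem hc v hh
    · intro hh
      have := conj_mem' hc v hh
      simpa [mul_assoc] using this
  have : Subgroup.normalizer (H G : Set (RAAG G)) = ⊤ := by
    rw [eq_top_iff, ← gen_range_top G, Subgroup.closure_le]
    rintro x ⟨v, rfl⟩
    exact hnorm v
  exact Subgroup.normalizer_eq_top_iff.1 this


section Kernel

variable [Nonempty V] (φ : RAAG G →* Multiplicative ℤ)
  (hφ : ∀ v : V, φ (RAAG.gen G v) = Multiplicative.ofAdd 1)

include hφ

lemma H_le_ker : H G ≤ MonoidHom.ker φ := by
  rw [H, Subgroup.closure_le]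
  rintro x ⟨u, v, huv, rfl⟩
  simp [MonoidHom.mem_ker, hφ u, hφ v]

lemma ker_le_H (hc : G.Connected) : MonoidHom.ker φ ≤ H G := by
  haveI : (H G).Normal := H_normal hc
  intro k hk
  set t : V := Classical.arbitrary V with ht
  set π : RAAG G →* RAAG G ⧸ H G := QuotientGroup.mk' (H G) with hπ
  have hgen : ∀ v : V, π (RAAG.gen G v) = π (RAAG.gen G t) := by
    intro v
    rw [QuotientGroup.mk'_eq_mk']
    exact ⟨(RAAG.gen G v)⁻¹ * RAAG.gen G t, elem2 hc v t, by group⟩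
  have hcyc : ∀ x : RAAG G, π x ∈ Subgroup.zpowers (π (RAAG.gen G t)) := by
    intro x
    have hx : x ∈ (⊤ : Subgroup (RAAG G)) := trivial
    rw [← gen_range_top G] at hx
    induction hx using Subgroup.closure_induction'' with
    | one => simpa using Subgroup.one_mem _
    | mem x hxs =>
        obtain ⟨v, rfl⟩ := hxs
        rw [hgen v]; exact Subgroup.mem_zpowers _
    | inv_mem x hxs =>
        obtain ⟨v, rfl⟩ := hxs
        rw [map_inv, hgen v]
        exact Subgroup.inv_mem _ (Subgroup.mem_zpowers _)
    | mul x y _ _ ihx ihy =>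
        rw [map_mul]; exact Subgroup.mul_mem _ ihx ihy
  obtain ⟨n, hn'⟩ := hcyc k
  have hn : π (RAAG.gen G t) ^ n = π k := hn'
  have hφ' : ∃ ψ : (RAAG G ⧸ H G) →* Multiplicative ℤ, ∀ x, ψ (π x) = φ x := by
    refine ⟨QuotientGroup.lift (H G) φ (fun x hx => H_le_ker φ hφ hx), fun x => rfl⟩
  obtain ⟨ψ, hψ⟩ := hφ'
  have h1 : ψ (π (RAAG.gen G t) ^ n) = 1 := by
    rw [hn, hψ]
    exact hk
  have h2 : ψ (π (RAAG.gen G t) ^ n) = Multiplicative.ofAdd n := by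
    rw [map_zpow, hψ, hφ t, ← ofAdd_zsmul, smul_eq_mul, mul_one]
  have hn0 : n = 0 := by
    have := h2.symm.trans h1
    simpa using this
  rw [hn0, zpow_zero] at hn
  have : π k = 1 := hn.symm
  rw [hπ] at this
  exact (QuotientGroup.eq_one_iff k).1 this

lemma ker_eq_H (hc : G.Connected) : MonoidHom.ker φ = H G :=
  le_antisymm (ker_le_H φ hφ hc) (H_le_ker φ hφ)

lemma ker_fg [Fintype V] (hc : G.Connected) : (MonoidHom.ker φ).FG := by
  rw [ker_eq_H φ hφ hc]
  rw [Subgroup.fg_iff]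
  refine ⟨edgeSet G, rfl, ?_⟩
  have : edgeSet G ⊆ Set.range (fun p : V × V => RAAG.gen G p.1 * (RAAG.gen G p.2)⁻¹) := by
    rintro x ⟨u, v, huv, rfl⟩; exact ⟨(u, v), rfl⟩
  exact Set.Finite.subset (Set.finite_range _) this

lemma surj : Function.Surjective φ := by
  intro y
  refine ⟨RAAG.gen G (Classical.arbitrary V) ^ y.toAdd, ?_⟩
  rw [map_zpow, hφ, ← ofAdd_zsmul, smul_eq_mul, mul_one, ofAdd_toAdd]

end Kernel


section Disconnected

/-- Shift automorphism of `ℤ →₀ ℤ`. -/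
def shiftE (z : ℤ) : (ℤ →₀ ℤ) ≃+ (ℤ →₀ ℤ) := Finsupp.domCongr (Equiv.addRight z)

abbrev N : Type := Multiplicative (ℤ →₀ ℤ)

/-- Shift action of `ℤ` on `ℤ →₀ ℤ`, multiplicatively. -/
noncomputable def act : Multiplicative ℤ →* MulAut N :=
  MonoidHom.mk' (fun z => AddEquiv.toMultiplicative (shiftE z.toAdd))
    (by
      intro a b
      ext x
      have key : ∀ (e : (ℤ →₀ ℤ) ≃+ (ℤ →₀ ℤ)) (x : N),
          AddEquiv.toMultiplicative e x = Multiplicative.ofAdd (e x.toAdd) := fun e x => rfl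
      simp only [MulAut.mul_def, MulEquiv.trans_apply, key, shiftE, Finsupp.domCongr_apply,
        toAdd_ofAdd]
      rw [← Finsupp.equivMapDomain_trans]
      congr 1
      ext i
      simp [Equiv.addRight]
      abel)

abbrev W : Type := SemidirectProduct N (Multiplicative ℤ) act

lemma act_apply (z : ℤ) (m : ℤ →₀ ℤ) :
    act (Multiplicative.ofAdd z) (Multiplicative.ofAdd m)
      = Multiplicative.ofAdd (Finsupp.equivMapDomain (Equiv.addRight z) m) := rfl

end Disconnected


section Disconnected2

open scoped Classical

variable (G) (a : V)

/-- Generator assignments into the wreath-like group `W`. -/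
noncomputable def fdis : V → W := fun v =>
  SemidirectProduct.inl (if G.Reachable a v then 1
    else Multiplicative.ofAdd (Finsupp.single (0 : ℤ) (1 : ℤ))) *
  SemidirectProduct.inr (Multiplicative.ofAdd (1 : ℤ))

lemma fdis_rel : ∀ r ∈ rels G, FreeGroup.lift (fdis G a) r = 1 := by
  rintro r ⟨u, v, huv, rfl⟩
  have hiff : G.Reachable a u ↔ G.Reachable a v :=
    ⟨fun h => h.trans huv.reachable, fun h => h.trans huv.symm.reachable⟩
  have hfeq : fdis G a u = fdis G a v := by
    unfold fdis
    rw [if_congr hiff rfl rfl]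
  simp only [map_mul, map_inv, FreeGroup.lift_apply_of, hfeq]
  group

/-- The homomorphism from the RAAG to `W`. -/
noncomputable def Ψdis : RAAG G →* W := PresentedGroup.toGroup (fdis_rel G a)

lemma Ψdis_gen (v : V) : Ψdis G a (RAAG.gen G v) = fdis G a v :=
  PresentedGroup.toGroup.of (fdis_rel G a)

variable (φ : RAAG G →* Multiplicative ℤ)
  (hφ : ∀ v : V, φ (RAAG.gen G v) = Multiplicative.ofAdd 1)

include hφ in
lemma right_Ψdis : ∀ x : RAAG G, (Ψdis G a x).right = φ x := by
  have h : SemidirectProduct.rightHom.comp (Ψdis G a) = φ := by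
    apply MonoidHom.eq_of_eqOn_dense (gen_range_top G)
    rintro x ⟨v, rfl⟩
    simp only [MonoidHom.coe_comp, Function.comp_apply, Ψdis_gen, fdis, map_mul,
      SemidirectProduct.rightHom_inl, SemidirectProduct.rightHom_inr, one_mul, hφ v]
  intro x
  rw [← h]
  rfl

/-- Support of the "lamp configuration" of `Ψdis`. -/
noncomputable def suppOf (x : RAAG G) : Finset ℤ :=
  (Multiplicative.toAdd ((Ψdis G a x).left)).support

include hφ in
lemma not_fg_of_not_reachable {b : V} (hab : ¬G.Reachable a b) :
    ¬ (MonoidHom.ker φ).FG := by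
  rintro ⟨F, hF⟩
  have hright := right_Ψdis G a φ hφ
  set Ψ := Ψdis G a with hΨ
  -- the subgroup of kernel elements with lamp support inside T
  set T : Finset ℤ := F.sup (suppOf G a) with hT
  have hact1 : ∀ m : N, act 1 m = m := by
    intro m; rw [map_one]; rfl
  set P : Subgroup (RAAG G) :=
    { carrier := {x | x ∈ MonoidHom.ker φ ∧ suppOf G a x ⊆ T}
      one_mem' := by
        constructor
        · exact (MonoidHom.ker φ).one_mem
        · simp [suppOf, map_one]
      mul_mem' := by
        rintro x y ⟨hx1, hx2⟩ ⟨hy1, hy2⟩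
        refine ⟨(MonoidHom.ker φ).mul_mem hx1 hy1, ?_⟩
        have hxr : (Ψ x).right = 1 := by rw [hright x]; exact hx1
        have hleft : (Ψ (x * y)).left = (Ψ x).left * (Ψ y).left := by
          rw [map_mul, SemidirectProduct.mul_left, hxr, hact1]
        have : suppOf G a (x * y) ⊆ suppOf G a x ∪ suppOf G a y := by
          simp only [suppOf, ← hΨ, hleft, toAdd_mul]
          exact Finsupp.support_add
        exact this.trans (Finset.union_subset hx2 hy2)
      inv_mem' := by
        rintro x ⟨hx1, hx2⟩
        refine ⟨(MonoidHom.ker φ).inv_mem hx1, ?_⟩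
        have hxr : (Ψ x).right = 1 := by rw [hright x]; exact hx1
        have hleft : (Ψ x⁻¹).left = ((Ψ x).left)⁻¹ := by
          rw [map_inv, SemidirectProduct.inv_left, hxr, inv_one, hact1]
        have : suppOf G a x⁻¹ = suppOf G a x := by
          simp only [suppOf, ← hΨ, hleft, toAdd_inv]
          exact Finsupp.support_neg _
        rw [this]; exact hx2 } with hP
  have hFP : ∀ g ∈ F, g ∈ P := by
    intro g hg
    refine ⟨?_, ?_⟩
    · rw [← hF]; exact Subgroup.subset_closure hg
    · have h := Finset.le_sup (f := suppOf G a) hg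
      exact h
  have hkerP : MonoidHom.ker φ ≤ P := by
    rw [← hF, Subgroup.closure_le]
    intro g hg; exact hFP g hg
  -- the offending element
  obtain ⟨n, hn⟩ := Infinite.exists_notMem_finset T
  set k : RAAG G := RAAG.gen G a ^ n * RAAG.gen G b * RAAG.gen G a ^ (-n - 1) with hk
  have hkker : k ∈ MonoidHom.ker φ := by
    have : φ k = Multiplicative.ofAdd (n • (1 : ℤ) + 1 + (-n - 1) • (1 : ℤ)) := by
      rw [hk, map_mul, map_mul, map_zpow, map_zpow, hφ a, hφ b,
        ← ofAdd_zsmul, ← ofAdd_zsmul, ← ofAdd_add, ← ofAdd_add]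
    have h0 : n • (1 : ℤ) + 1 + (-n - 1) • (1 : ℤ) = 0 := by
      simp [smul_eq_mul]
    rw [MonoidHom.mem_ker, this, h0]
    rfl
  -- compute its lamp configuration
  have hΨa : Ψ (RAAG.gen G a) = SemidirectProduct.inr (Multiplicative.ofAdd (1 : ℤ)) := by
    rw [hΨ, Ψdis_gen, fdis, if_pos (SimpleGraph.Reachable.refl a), map_one, one_mul]
  have hΨb : Ψ (RAAG.gen G b) =
      SemidirectProduct.inl (Multiplicative.ofAdd (Finsupp.single (0 : ℤ) (1 : ℤ))) *
      SemidirectProduct.inr (Multiplicative.ofAdd (1 : ℤ)) := by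
    rw [hΨ, Ψdis_gen, fdis, if_neg hab]
  set z : Multiplicative ℤ := Multiplicative.ofAdd (1 : ℤ) ^ n with hz
  set μ : N := Multiplicative.ofAdd (Finsupp.single (0 : ℤ) (1 : ℤ)) with hμ
  have harr : (Multiplicative.ofAdd (1 : ℤ)) ^ (-n - 1)
      = (Multiplicative.ofAdd (1 : ℤ))⁻¹ * z⁻¹ := by
    rw [hz, ← zpow_neg, ← zpow_neg_one, ← zpow_add]
    congr 1
    ring
  have e1 : Ψ (RAAG.gen G a ^ n) = SemidirectProduct.inr z := by
    rw [map_zpow, hΨa, ← map_zpow]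
  have e2 : Ψ (RAAG.gen G a ^ (-n - 1)) =
      SemidirectProduct.inr ((Multiplicative.ofAdd (1 : ℤ))⁻¹ * z⁻¹) := by
    rw [map_zpow, hΨa, ← map_zpow, harr]
  have hΨk : Ψ k = SemidirectProduct.inr z * SemidirectProduct.inl μ *
      SemidirectProduct.inr z⁻¹ := by
    rw [hk, map_mul, map_mul, e1, hΨb, e2, map_mul, map_inv, map_inv]
    group
  have hleftk : (Ψ k).left = act z μ := by
    rw [hΨk, ← SemidirectProduct.inl_aut z μ, SemidirectProduct.left_inl]
  have hz' : z = Multiplicative.ofAdd n := by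
    rw [hz, ← ofAdd_zsmul, smul_eq_mul, mul_one]
  have hsingle : act z μ = Multiplicative.ofAdd (Finsupp.single n (1 : ℤ)) := by
    rw [hz', hμ, act_apply, Finsupp.equivMapDomain_single]
    congr 1
    simp
  have hsupp : suppOf G a k = {n} := by
    rw [suppOf, ← hΨ, hleftk, hsingle, toAdd_ofAdd]
    exact Finsupp.support_single_ne_zero n one_ne_zero
  have := (hkerP hkker).2
  rw [hsupp] at this
  exact hn (this (Finset.mem_singleton_self n))

end Disconnected2

end RaagAux

theorem raag_fibres_iff_connected {V : Type} [Fintype V] [Nonempty V]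
    (G : SimpleGraph V) (φ : RAAG G →* Multiplicative ℤ)
    (hφ : ∀ v : V, φ (RAAG.gen G v) = Multiplicative.ofAdd 1) :
    (Function.Surjective φ ∧ (MonoidHom.ker φ).FG) ↔ G.Connected := by
  constructor
  · rintro ⟨-, hfg⟩
    by_contra hnc
    have hpre : ¬G.Preconnected := by
      intro hp
      exact hnc ⟨hp⟩
    rw [SimpleGraph.Preconnected] at hpre
    push_neg at hpre
    obtain ⟨a, b, hab⟩ := hpre
    exact RaagAux.not_fg_of_not_reachable G a φ hφ hab hfg
  · intro hc
    exact ⟨RaagAux.surj φ hφ, RaagAux.ker_fg φ hφ hc⟩
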